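/- Let q > 1 be an integer such that there is no projective plane of order q. Then μ(q² + q + 1) > f(q² + q + 1) = q. Equivalently (contrapositive): if there exists a mediated digraph on q² + q + 1 vertices with maximum in-degree at most q, then there exists a projective plane of order q. -/
import Mathlib


/-- The in-degree of vertex `z` in the digraph on `Fin n` with arc relation `A`
(`A x z` means `x` dominates `z`). -/
noncomputable def inDeg {n : ℕ} (A : Fin n → Fin n → Prop) (z : Fin n) : ℕ :=
  Nat.card {x : Fin n // A x z}

/-- The maximum in-degree `Δ⁻(D)` of the digraph on `Fin n` with arc relation `A`. -/
noncomputable def maxInDeg {n : ℕ} (A : Fin n → Fin n → Prop) : ℕ :=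
  Finset.univ.sup (inDeg A)

/-- A digraph is mediated if for every pair of distinct vertices `x, y` there is a
vertex `z` with `x, y ∈ N⁻[z]` (possibly `z = x` or `z = y`). -/
def Mediated {n : ℕ} (A : Fin n → Fin n → Prop) : Prop :=
  ∀ x y : Fin n, x ≠ y → ∃ z : Fin n, (x = z ∨ A x z) ∧ (y = z ∨ A y z)

/-- The `n`th mediation number `μ(n)`: the minimum of `Δ⁻(D)` over all mediated
digraphs (irreflexive arc relations) on `n` vertices. -/
noncomputable def mu (n : ℕ) : ℕ :=
  sInf { d : ℕ | ∃ A : Fin n → Fin n → Prop, Irreflexive A ∧ Mediated A ∧ maxInDeg A = d }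

/-- `f(n) = ⌈(√(4n−3) − 1)/2⌉`. -/
noncomputable def f (n : ℕ) : ℕ := ⌈(Real.sqrt (4 * (n : ℝ) - 3) - 1) / 2⌉₊

/-- `B` is a projective plane of order `q`: a symmetric `(q²+q+1, q+1, 1)`-design,
i.e. `q²+q+1` blocks on `q²+q+1` points, each block of size `q+1`, and every pair
of distinct points contained in exactly one block. -/
def IsProjectivePlane (q : ℕ) (B : Fin (q^2+q+1) → Finset (Fin (q^2+q+1))) : Prop :=
  (∀ i, (B i).card = q + 1) ∧
  ∀ x y : Fin (q^2+q+1), x ≠ y →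
    (Finset.univ.filter fun i => x ∈ B i ∧ y ∈ B i).card = 1

/-- There exists a projective plane of order `q`. -/
def ExistsProjectivePlane (q : ℕ) : Prop := ∃ B, IsProjectivePlane q B

lemma mul_self_sub_self (m : ℕ) : m * m - m = m * (m - 1) := by
  cases m with
  | zero => rfl
  | succ k => rw [Nat.succ_sub_one, Nat.mul_succ, Nat.add_sub_cancel]

open scoped Classical in
/-- The closed in-neighborhood of `z`, as a finset. -/
noncomputable def blk {n : ℕ} (A : Fin n → Fin n → Prop) (z : Fin n) : Finset (Fin n) :=
  insert z (Finset.univ.filter fun x => A x z)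

open scoped Classical in
/-- The number of blocks containing both coordinates of `p`. -/
noncomputable def cnt {n : ℕ} (A : Fin n → Fin n → Prop) (p : Fin n × Fin n) : ℕ :=
  (Finset.univ.filter fun z => p.1 ∈ blk A z ∧ p.2 ∈ blk A z).card

/-- The key combinatorial step: a mediated digraph on `q²+q+1` vertices with
maximum in-degree at most `q` gives a projective plane of order `q`. -/
lemma plane_of_mediated (q : ℕ) (hq : 1 ≤ q)
    (A : Fin (q^2+q+1) → Fin (q^2+q+1) → Prop)
    (hmed : Mediated A) (hdeg : maxInDeg A ≤ q) :
    ExistsProjectivePlane q := by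
  classical
  have hself : ∀ z, z ∈ blk A z := fun z => Finset.mem_insert_self _ _
  have hmemB : ∀ x z, (x = z ∨ A x z) → x ∈ blk A z := by
    intro x z hx
    rcases hx with h | h
    · exact h ▸ Finset.mem_insert_self _ _
    · exact Finset.mem_insert_of_mem (Finset.mem_filter.2 ⟨Finset.mem_univ _, h⟩)
  have hcard : ∀ z, (blk A z).card ≤ q + 1 := by
    intro z
    have h1 : (Finset.univ.filter fun x => A x z).card = inDeg A z := by
      rw [inDeg, Nat.card_eq_fintype_card, Fintype.card_subtype]
    have h2 : inDeg A z ≤ q := le_trans (Finset.le_sup (Finset.mem_univ z)) hdeg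
    calc (blk A z).card ≤ (Finset.univ.filter fun x => A x z).card + 1 :=
          Finset.card_insert_le _ _
      _ ≤ q + 1 := by omega
  set P : Finset (Fin (q^2+q+1) × Fin (q^2+q+1)) :=
    (Finset.univ : Finset (Fin (q^2+q+1))).offDiag with hP
  have hc1 : ∀ p ∈ P, 1 ≤ cnt A p := by
    intro p hp
    rw [hP, Finset.mem_offDiag] at hp
    obtain ⟨z, hz1, hz2⟩ := hmed p.1 p.2 hp.2.2
    rw [cnt]
    exact Finset.card_pos.2 ⟨z, Finset.mem_filter.2
      ⟨Finset.mem_univ _, hmemB _ _ hz1, hmemB _ _ hz2⟩⟩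
  have hswap : ∑ p ∈ P, cnt A p = ∑ z : Fin (q^2+q+1), ((blk A z).offDiag).card := by
    have hfz : ∀ z : Fin (q^2+q+1),
        (P.filter fun p => p.1 ∈ blk A z ∧ p.2 ∈ blk A z) = (blk A z).offDiag := by
      intro z
      ext p
      simp only [hP, Finset.mem_filter, Finset.mem_offDiag, Finset.mem_univ, true_and]
      tauto
    calc ∑ p ∈ P, cnt A p
        = ∑ p ∈ P, ∑ z : Fin (q^2+q+1),
            if p.1 ∈ blk A z ∧ p.2 ∈ blk A z then 1 else 0 := by
          refine Finset.sum_congr rfl fun p _ => ?_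
          rw [cnt, Finset.card_filter]
      _ = ∑ z : Fin (q^2+q+1), ∑ p ∈ P,
            if p.1 ∈ blk A z ∧ p.2 ∈ blk A z then 1 else 0 :=
          Finset.sum_comm
      _ = ∑ z : Fin (q^2+q+1), ((blk A z).offDiag).card := by
          refine Finset.sum_congr rfl fun z _ => ?_
          rw [← hfz z, Finset.card_filter]
  have hub : ∀ z : Fin (q^2+q+1), ((blk A z).offDiag).card ≤ q * q + q := by
    intro z
    rw [Finset.offDiag_card, mul_self_sub_self]
    calc (blk A z).card * ((blk A z).card - 1) ≤ (q + 1) * q :=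
          Nat.mul_le_mul (hcard z) (by have := hcard z; omega)
      _ = q * q + q := by ring
  have hPcard : P.card = (q^2+q+1) * (q * q + q) := by
    rw [hP, Finset.offDiag_card, Finset.card_univ, Fintype.card_fin,
      mul_self_sub_self]
    have h1 : q^2+q+1 - 1 = q * q + q := by
      have : q ^ 2 = q * q := sq q
      omega
    rw [h1]
  have hsum_ub : ∑ z : Fin (q^2+q+1), ((blk A z).offDiag).card
      ≤ (q^2+q+1) * (q * q + q) := by
    calc ∑ z : Fin (q^2+q+1), ((blk A z).offDiag).card
        ≤ ∑ _z : Fin (q^2+q+1), (q * q + q) := Finset.sum_le_sum fun z _ => hub z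
      _ = (q^2+q+1) * (q * q + q) := by
          rw [Finset.sum_const, Finset.card_univ, Fintype.card_fin, smul_eq_mul]
  have hsum_lb : P.card ≤ ∑ p ∈ P, cnt A p := by
    calc P.card = ∑ _p ∈ P, 1 := by rw [Finset.sum_const, smul_eq_mul, mul_one]
      _ ≤ ∑ p ∈ P, cnt A p := Finset.sum_le_sum hc1
  have htot : ∑ p ∈ P, cnt A p = P.card := by omega
  have hblocktot : ∑ z : Fin (q^2+q+1), ((blk A z).offDiag).card
      = ∑ _z : Fin (q^2+q+1), (q * q + q) := by
    rw [Finset.sum_const, Finset.card_univ, Fintype.card_fin, smul_eq_mul]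
    omega
  -- every pair is in exactly one block
  have hpair : ∀ p ∈ P, cnt A p = 1 := by
    intro p hp
    by_contra hne
    have h2 : 1 < cnt A p := lt_of_le_of_ne (hc1 p hp) (Ne.symm hne)
    have hlt : ∑ _p ∈ P, 1 < ∑ p ∈ P, cnt A p :=
      Finset.sum_lt_sum hc1 ⟨p, hp, h2⟩
    rw [Finset.sum_const, smul_eq_mul, mul_one] at hlt
    omega
  -- every block has exactly q*q + q off-diagonal pairs
  have hblock : ∀ z : Fin (q^2+q+1), ((blk A z).offDiag).card = q * q + q := by
    intro z
    by_contra hne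
    have h2 : ((blk A z).offDiag).card < q * q + q := lt_of_le_of_ne (hub z) hne
    have hlt : ∑ z : Fin (q^2+q+1), ((blk A z).offDiag).card
        < ∑ _z : Fin (q^2+q+1), (q * q + q) :=
      Finset.sum_lt_sum (fun z _ => hub z) ⟨z, Finset.mem_univ z, h2⟩
    omega
  -- hence every block has size q+1
  have hbsize : ∀ z : Fin (q^2+q+1), (blk A z).card = q + 1 := by
    intro z
    have hle := hcard z
    have hpos : 1 ≤ (blk A z).card := Finset.card_pos.2 ⟨z, hself z⟩
    have heq := hblock z
    rw [Finset.offDiag_card] at heq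
    by_contra hne
    have hleq : (blk A z).card ≤ q := by omega
    have hmm : (blk A z).card * (blk A z).card ≤ q * q := Nat.mul_le_mul hleq hleq
    have hml : (blk A z).card ≤ (blk A z).card * (blk A z).card :=
      Nat.le_mul_of_pos_left _ hpos
    generalize hgen1 : (blk A z).card * (blk A z).card = a at hmm hml heq
    generalize hgen2 : q * q = b at hmm heq
    omega
  refine ⟨blk A, hbsize, fun x y hxy => ?_⟩
  have hmem : (x, y) ∈ P :=
    Finset.mem_offDiag.2 ⟨Finset.mem_univ _, Finset.mem_univ _, hxy⟩
  have h1 := hpair (x, y) hmem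
  rw [cnt] at h1
  exact h1

/-- If `q > 1` and there is no projective plane of order `q`, then
`μ(q² + q + 1) > f(q² + q + 1) = q`. Equivalently (contrapositive): if some
mediated digraph on `q² + q + 1` vertices has maximum in-degree at most `q`,
then there exists a projective plane of order `q`. -/
theorem mu_gt_f_of_no_projective_plane (q : ℕ) (hq : 1 < q)
    (h : ¬ ExistsProjectivePlane q) :
    f (q ^ 2 + q + 1) = q ∧ f (q ^ 2 + q + 1) < mu (q ^ 2 + q + 1) := by
  have hf : f (q ^ 2 + q + 1) = q := by
    have h4 : (4 * (((q ^ 2 + q + 1 : ℕ)) : ℝ) - 3) = ((2 * q + 1 : ℝ)) ^ 2 := by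
      push_cast; ring
    rw [f, h4, Real.sqrt_sq (by positivity)]
    have h5 : ((2 * (q : ℝ) + 1) - 1) / 2 = (q : ℝ) := by ring
    rw [h5, Nat.ceil_natCast]
  refine ⟨hf, ?_⟩
  rw [hf]
  set n := q ^ 2 + q + 1 with hn
  have hne : { d : ℕ | ∃ A : Fin n → Fin n → Prop,
      Irreflexive A ∧ Mediated A ∧ maxInDeg A = d }.Nonempty := by
    refine ⟨maxInDeg (fun x y : Fin n => x ≠ y), fun x y : Fin n => x ≠ y,
      fun x hx => hx rfl, fun x y hxy => ⟨x, Or.inl rfl, Or.inr (Ne.symm hxy)⟩, rfl⟩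
  obtain ⟨A, hirr, hmed, hA⟩ := Nat.sInf_mem hne
  by_contra hle
  push_neg at hle
  have hdeg : maxInDeg A ≤ q := by rw [hA]; exact hle
  exact h (plane_of_mediated q (le_of_lt hq) A hmed hdeg)
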